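/- Let R be a commutative ring with unity, G = (V, E) a finite edge-labeled graph over R with labeling α, and f ∈ R an element with f ∈ α(e) for every edge e ∈ E. Then after inverting f the graph becomes trivial: the natural map R_f ⊗_R R_G → ∏_{v ∈ V} R_f (induced by the inclusion R_G ⊆ ∏_{v ∈ V} R and localization at f applied componentwise) is an isomorphism of R_f-algebras onto the full product ring ∏_{v ∈ V} R_f. -/

import Mathlib

open scoped TensorProduct

set_option synthInstance.maxHeartbeats 400000
set_option maxHeartbeats 800000

variable {R : Type*} [CommRing R] {V : Type*}

/-- A spline on an edge-labeled graph: a vertex labeling by ring elements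
such that adjacent labels agree modulo the edge ideal. -/
def IsSpline (E : V → V → Prop) (α : V → V → Ideal R) (s : V → R) : Prop :=
  ∀ u v, E u v → s u - s v ∈ α u v

/-- The ring of splines, as an `R`-subalgebra of the product ring `V → R`
(the `R`-algebra structure on the spline ring is the diagonal embedding by
constant splines). -/
def splineSubalgebra (E : V → V → Prop) (α : V → V → Ideal R) :
    Subalgebra R (V → R) where
  carrier := {s | IsSpline E α s}
  algebraMap_mem' := by intro r u v _; simp
  add_mem' := by
    intro a b ha hb u v h
    have key : (a + b) u - (a + b) v = (a u - a v) + (b u - b v) := by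
      simp only [Pi.add_apply]; ring
    rw [key]; exact add_mem (ha u v h) (hb u v h)
  mul_mem' := by
    intro a b ha hb u v h
    have key : (a * b) u - (a * b) v = a u * (b u - b v) + (a u - a v) * b v := by
      simp only [Pi.mul_apply]; ring
    rw [key]
    exact add_mem (Ideal.mul_mem_left _ _ (hb u v h)) (Ideal.mul_mem_right _ _ (ha u v h))

variable (S : Type*) [CommRing S] [Algebra R S]

/-- Componentwise application of `algebraMap R S`, as an `R`-algebra map
`(V → R) → (V → S)`. -/
def piAlgebraMap : (V → R) →ₐ[R] (V → S) where
  toFun := fun s v => algebraMap R S (s v)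
  map_one' := by funext v; simp
  map_mul' := by intro a b; funext v; simp
  map_zero' := by funext v; simp
  map_add' := by intro a b; funext v; simp
  commutes' := by intro r; funext v; simp

/-- The natural base-change map `S ⊗_R R_G → ∏_{v ∈ V} S`, induced by the
inclusion `R_G ⊆ ∏_{v ∈ V} R` and by `R → S` componentwise. -/
noncomputable def splineBaseChange (E : V → V → Prop) (α : V → V → Ideal R) :
    S ⊗[R] (splineSubalgebra E α) →ₐ[S] (V → S) :=
  Algebra.TensorProduct.lift (Algebra.ofId S (V → S))
    ((piAlgebraMap S).comp (splineSubalgebra E α).val)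
    (fun _ _ => Commute.all _ _)


lemma splineBaseChange_tmul_apply (E : V → V → Prop) (α : V → V → Ideal R)
    (s : S) (t : splineSubalgebra E α) (v : V) :
    splineBaseChange S E α (s ⊗ₜ[R] t) v = s * algebraMap R S ((t : V → R) v) := by
  simp [splineBaseChange, piAlgebraMap, Algebra.ofId_apply, Algebra.TensorProduct.lift_tmul]

/-- If `f ∈ α(e)` for every edge `e`, then after inverting
`f` the graph becomes trivial: the natural map
`R_f ⊗_R R_G → ∏_{v ∈ V} R_f` is an isomorphism of `R_f`-algebras onto the
full product ring. -/
theorem spline_localization_trivializes {R V : Type*} [CommRing R] [Fintype V]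
    (E : V → V → Prop) (hsymm : Symmetric E) (hirr : Irreflexive E)
    (α : V → V → Ideal R) (hα : ∀ u v, α u v = α v u)
    (f : R) (hf : ∀ u v, E u v → f ∈ α u v) :
    Function.Bijective (splineBaseChange (Localization.Away f) E α) := by
  classical
  set S := Localization.Away f
  set φ := splineBaseChange S E α with hφ
  constructor
  · -- injectivity via flatness of the localization
    have hval : Function.Injective
        ((splineSubalgebra E α).val.toLinearMap : (splineSubalgebra E α) →ₗ[R] (V → R)) :=
      Subtype.val_injective
    have hflat : Module.Flat R S := Localization.flat _ _
    have hj : Function.Injective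
        (LinearMap.lTensor S ((splineSubalgebra E α).val.toLinearMap) :
          S ⊗[R] (splineSubalgebra E α) →ₗ[R] S ⊗[R] (V → R)) :=
      Module.Flat.lTensor_preserves_injective_linearMap _ hval
    have hpi : Function.Injective (TensorProduct.piScalarRightHom R S S V) := by
      have : Function.Injective (TensorProduct.piScalarRight R S S V) :=
        (TensorProduct.piScalarRight R S S V).injective
      simpa [funext (TensorProduct.piScalarRight_apply R S S V)] using this
    have key : ∀ x : S ⊗[R] (splineSubalgebra E α),
        φ x = TensorProduct.piScalarRightHom R S S V
          (LinearMap.lTensor S ((splineSubalgebra E α).val.toLinearMap) x) := by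
      intro x
      induction x using TensorProduct.induction_on with
      | zero => simp
      | tmul s t =>
          simp only [hφ, splineBaseChange, Algebra.TensorProduct.lift_tmul,
            LinearMap.lTensor_tmul, TensorProduct.piScalarRightHom_tmul]
          funext v
          simp [Algebra.ofId_apply, piAlgebraMap, Algebra.smul_def, mul_comm]
        | add x y hx hy => simp [map_add, hx, hy]
    intro a b hab
    apply hj
    apply hpi
    rw [← key, ← key, hab]
  · -- surjectivity
    intro g
    -- the scaled delta splines
    have hspline : ∀ v : V, (Pi.single v f : V → R) ∈ splineSubalgebra E α := by
      intro v u w h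
      have huw : u ≠ w := fun e => hirr u (e ▸ h)
      by_cases hu : u = v
      · subst hu
        rw [Pi.single_eq_same, Pi.single_eq_of_ne huw.symm]
        simpa using hf u w h
      · rw [Pi.single_eq_of_ne hu]
        by_cases hw : w = v
        · subst hw
          rw [Pi.single_eq_same]
          simpa using neg_mem (hf u w h)
        · rw [Pi.single_eq_of_ne hw]
          simp
    set d : V → splineSubalgebra E α := fun v => ⟨Pi.single v f, hspline v⟩ with hd
    refine ⟨∑ v : V, (g v * IsLocalization.Away.invSelf f) ⊗ₜ[R] d v, ?_⟩
    rw [map_sum]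
    have key : ∀ v : V,
        φ ((g v * IsLocalization.Away.invSelf f) ⊗ₜ[R] d v) = Pi.single v (g v) := by
      intro v
      funext u
      rw [hφ, splineBaseChange_tmul_apply]
      have hcoe : ((d v : V → R)) = Pi.single v f := rfl
      rw [hcoe]
      by_cases hu : u = v
      · subst hu
        rw [Pi.single_eq_same, Pi.single_eq_same, mul_assoc,
          mul_comm (IsLocalization.Away.invSelf f), IsLocalization.Away.mul_invSelf, mul_one]
      · rw [Pi.single_eq_of_ne hu, Pi.single_eq_of_ne hu, map_zero, mul_zero]
    simp only [key]
    exact Finset.univ_sum_single g
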